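/- arXiv:1902.02115 — 3 statements merged into one kernel-verified Lean document; each statement's English description precedes it below -/
import Mathlib

section
/- Let r,s ∈ {0,...,n} and let E_{r,s} = conj(A_0)⊗A_0⊗I⊗I + conj(A_1)⊗A_1⊗I⊗I + conj(A_0)⊗A_1⊗I⊗J_{+,s} + conj(A_1)⊗A_0⊗J_{+,r}⊗I + conj(A_1)⊗A_1⊗J_{+,r}⊗J_{+,s} act on C^2⊗C^2⊗C^{r+1}⊗C^{s+1}, where A_0 = σ_+, A_1 = diag(1,ω), ω = exp(2πi/n), and J_{+,r}, J_{+,s} are spin raising operators (strictly lower triangular in the standard basis). Then the spectrum of E_{r,s} is {1, ω, ω̄}, with eigenvalue 1 of algebraic multiplicity 2(r+1)(s+1), and eigenvalues ω and ω̄ each of algebraic multiplicity (r+1)(s+1). -/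
open Kronecker Polynomial

noncomputable def ω (n : ℕ) : ℂ := Complex.exp (2 * Real.pi * Complex.I / n)

noncomputable def A0 : Matrix (Fin 2) (Fin 2) ℂ := !![0, 0; 1, 0]

noncomputable def A1 (n : ℕ) : Matrix (Fin 2) (Fin 2) ℂ := !![1, 0; 0, ω n]

noncomputable def mconj (A : Matrix (Fin 2) (Fin 2) ℂ) : Matrix (Fin 2) (Fin 2) ℂ :=
  A.map (starRingEnd ℂ)

/-- The raising operator `J₊` of the spin-`r/2` irreducible representation of `su(2)`,
acting on `ℂ^{r+1}`: `J₊|k⟩ = √((k+1)(r-k)) |k+1⟩` (strictly lower triangular in the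
standard ordered basis). -/
noncomputable def Jplus (r : ℕ) : Matrix (Fin (r + 1)) (Fin (r + 1)) ℂ :=
  Matrix.of fun i j =>
    if (i : ℕ) = (j : ℕ) + 1 then (Real.sqrt (((j : ℕ) + 1) * (r - (j : ℕ))) : ℂ) else 0

/-- The combined transfer operator `E_{r,s}` of magnon states on
`ℂ²⊗ℂ²⊗ℂ^{r+1}⊗ℂ^{s+1}`. -/
noncomputable def Ers (n r s : ℕ) :
    Matrix (((Fin 2 × Fin 2) × Fin (r + 1)) × Fin (s + 1))
      (((Fin 2 × Fin 2) × Fin (r + 1)) × Fin (s + 1)) ℂ :=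
  (mconj A0 ⊗ₖ A0) ⊗ₖ (1 : Matrix (Fin (r + 1)) (Fin (r + 1)) ℂ) ⊗ₖ
      (1 : Matrix (Fin (s + 1)) (Fin (s + 1)) ℂ) +
    (mconj (A1 n) ⊗ₖ A1 n) ⊗ₖ (1 : Matrix (Fin (r + 1)) (Fin (r + 1)) ℂ) ⊗ₖ
      (1 : Matrix (Fin (s + 1)) (Fin (s + 1)) ℂ) +
    (mconj A0 ⊗ₖ A1 n) ⊗ₖ (1 : Matrix (Fin (r + 1)) (Fin (r + 1)) ℂ) ⊗ₖ Jplus s +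
    (mconj (A1 n) ⊗ₖ A0) ⊗ₖ Jplus r ⊗ₖ (1 : Matrix (Fin (s + 1)) (Fin (s + 1)) ℂ) +
    (mconj (A1 n) ⊗ₖ A1 n) ⊗ₖ Jplus r ⊗ₖ Jplus s

section Aux

private lemma mixed_radix' {m A A' d d' : ℕ} (hd : d < m) (hd' : d' < m)
    (h : A * m + d = A' * m + d') : A = A' ∧ d = d' := by
  have h2 := congrArg (· % m) h
  rw [add_comm (A*m) d, add_comm (A'*m) d', Nat.add_mul_mod_self_right,
    Nat.add_mul_mod_self_right, Nat.mod_eq_of_lt hd, Nat.mod_eq_of_lt hd'] at h2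
  subst h2
  have h3 : A * m = A' * m := Nat.add_right_cancel h
  exact ⟨Nat.eq_of_mul_eq_mul_right (by omega) h3, rfl⟩

private lemma charpoly_of_injective_blockTriangular {ι : Type*} [Fintype ι] [DecidableEq ι]
    (M : Matrix ι ι ℂ) (b : ι → ℤ) (hb : Function.Injective b)
    (h : M.BlockTriangular b) :
    M.charpoly = ∏ i, (X - C (M i i)) := by
  rw [h.charpoly]
  rw [Finset.prod_image (fun x _ y _ hxy => hb hxy)]
  refine Finset.prod_congr rfl fun x _ => ?_
  haveI : Unique {y // b y = b x} :=
    ⟨⟨⟨x, rfl⟩⟩, fun y => Subtype.ext (hb y.2)⟩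
  have hd : (default : {y // b y = b x}) = ⟨x, rfl⟩ :=
    Subtype.ext (hb (default : {y // b y = b x}).2)
  rw [Matrix.charpoly, Matrix.det_unique, hd]
  simp [Matrix.charmatrix_apply, Matrix.toSquareBlock_def]

/-- encoding of the index as an integer, reversed so that `Ers` is block triangular. -/
private def code (r s : ℕ) (x : ((Fin 2 × Fin 2) × Fin (r + 1)) × Fin (s + 1)) : ℤ :=
  -((((x.1.1.1 : ℕ) * 2 + (x.1.1.2 : ℕ)) * (r+1) * (s+1) + (x.1.2 : ℕ) * (s+1) + (x.2 : ℕ)) : ℤ)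

private lemma code_injective (r s : ℕ) : Function.Injective (code r s) := by
  rintro ⟨⟨⟨a, b⟩, c⟩, d⟩ ⟨⟨⟨a', b'⟩, c'⟩, d'⟩ h
  simp only [code, neg_inj] at h
  have h0 : (((a : ℕ) * 2 + (b : ℕ)) * (r+1) * (s+1) + (c : ℕ) * (s+1) + (d : ℕ))
      = (((a' : ℕ) * 2 + (b' : ℕ)) * (r+1) * (s+1) + (c' : ℕ) * (s+1) + (d' : ℕ)) := by
    exact_mod_cast h
  have h' : (((a : ℕ) * 2 + (b : ℕ)) * (r+1) + (c : ℕ)) * (s+1) + (d : ℕ)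
      = (((a' : ℕ) * 2 + (b' : ℕ)) * (r+1) + (c' : ℕ)) * (s+1) + (d' : ℕ) := by
    linear_combination h0
  obtain ⟨h1, h2⟩ := mixed_radix' d.2 d'.2 h'
  obtain ⟨h3, h4⟩ := mixed_radix' c.2 c'.2 h1
  have ha : (a : ℕ) = a' ∧ (b : ℕ) = b' := by
    have := a.2; have := a'.2; have := b.2; have := b'.2; omega
  have : a = a' := Fin.ext ha.1
  have : b = b' := Fin.ext ha.2
  have : c = c' := Fin.ext h4
  have : d = d' := Fin.ext h2
  simp_all

set_option maxHeartbeats 1600000 in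
private lemma Ers_blockTriangular (n r s : ℕ) :
    (Ers n r s).BlockTriangular (code r s) := by
  rintro ⟨⟨⟨a, b⟩, c⟩, d⟩ ⟨⟨⟨a', b'⟩, c'⟩, d'⟩ hlt
  simp only [code, neg_lt_neg_iff] at hlt
  have hc : (c : ℕ) ≤ r := Nat.lt_succ_iff.mp c.2
  have hc' : (c' : ℕ) ≤ r := Nat.lt_succ_iff.mp c'.2
  have hd : (d : ℕ) ≤ s := Nat.lt_succ_iff.mp d.2
  have hd' : (d' : ℕ) ≤ s := Nat.lt_succ_iff.mp d'.2
  push_cast at hlt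
  simp only [Ers, Matrix.add_apply, Matrix.kroneckerMap_apply, mconj, A0, A1, Jplus,
    Matrix.map_apply, Matrix.one_apply, Matrix.of_apply]
  zify at hc hc' hd hd'
  fin_cases a <;> fin_cases b <;> fin_cases a' <;> fin_cases b' <;>
    (try simp_all [Fin.ext_iff]) <;>
    (try intro h1 h2) <;> (try split_ifs)
  all_goals try norm_num
  all_goals try (exfalso; omega)
  all_goals try (exfalso; nlinarith [hlt, hc, hc', hd, hd'])

private lemma Ers_diag (n r s : ℕ) (x : ((Fin 2 × Fin 2) × Fin (r + 1)) × Fin (s + 1)) :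
    Ers n r s x x = (starRingEnd ℂ) (A1 n x.1.1.1 x.1.1.1) * A1 n x.1.1.2 x.1.1.2 := by
  obtain ⟨⟨⟨a, b⟩, c⟩, d⟩ := x
  simp only [Ers, Matrix.add_apply, Matrix.kroneckerMap_apply, mconj, Matrix.map_apply,
    Matrix.one_apply_eq, Matrix.of_apply, Jplus]
  have hcc : ¬((c : ℕ) = (c : ℕ) + 1) := by omega
  have hdd : ¬((d : ℕ) = (d : ℕ) + 1) := by omega
  rw [if_neg hcc, if_neg hdd]
  fin_cases a <;> fin_cases b <;> simp [A0, A1]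

private lemma conj_ω_mul (n : ℕ) : (starRingEnd ℂ) (ω n) * ω n = 1 := by
  rw [ω, ← Complex.exp_conj, ← Complex.exp_add]
  have h2 : (starRingEnd ℂ) (2 * Real.pi * Complex.I / n)
      = -(2 * Real.pi * Complex.I / n) := by
    simp [map_div₀, map_mul, Complex.conj_I, map_ofNat]
    ring
  rw [h2, neg_add_cancel, Complex.exp_zero]

private lemma prod_fst {α β M : Type*} [Fintype α] [Fintype β] [CommMonoid M] (g : α → M) :
    ∏ x : α × β, g x.1 = (∏ a, g a) ^ Fintype.card β := by
  rw [Fintype.prod_prod_type]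
  simp [Finset.prod_const, ← Finset.prod_pow]

end Aux

set_option maxHeartbeats 1600000 in
/-- The spectrum of `E_{r,s}` is `{1, ω, ω̄}` with eigenvalue `1` of algebraic
multiplicity `2(r+1)(s+1)` and `ω`, `ω̄` each of algebraic multiplicity `(r+1)(s+1)`,
expressed via the characteristic polynomial. -/
theorem Ers_charpoly (n r s : ℕ) (hn : 0 < n) (hr : r ≤ n) (hs : s ≤ n) :
    (Ers n r s).charpoly =
      (X - C 1) ^ (2 * (r + 1) * (s + 1)) *
        (X - C (ω n)) ^ ((r + 1) * (s + 1)) *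
        (X - C (starRingEnd ℂ (ω n))) ^ ((r + 1) * (s + 1)) := by
  rw [charpoly_of_injective_blockTriangular _ (code r s) (code_injective r s)
    (Ers_blockTriangular n r s)]
  have hprod : (∏ x : ((Fin 2 × Fin 2) × Fin (r + 1)) × Fin (s + 1),
      (X - C (Ers n r s x x)))
      = ((∏ p : Fin 2 × Fin 2,
          (X - C ((starRingEnd ℂ) (A1 n p.1 p.1) * A1 n p.2 p.2))) ^ (r + 1)) ^ (s + 1) := by
    simp only [Ers_diag]
    rw [Fintype.prod_prod_type]
    simp only [Finset.prod_const, Finset.card_univ, Fintype.card_fin]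
    rw [Fintype.prod_prod_type]
    simp only [Finset.prod_const, Finset.card_univ, Fintype.card_fin]
    rw [← Finset.prod_pow, ← Finset.prod_pow]
    refine Finset.prod_congr rfl fun p _ => ?_
    rw [← pow_mul, ← pow_mul, Nat.mul_comm]
  rw [hprod, Fintype.prod_prod_type]
  rw [Fin.prod_univ_two fun a => ∏ b : Fin 2, (X - C ((starRingEnd ℂ) (A1 n a a) * A1 n b b))]
  rw [Fin.prod_univ_two fun b => (X - C ((starRingEnd ℂ) (A1 n 0 0) * A1 n b b))]
  rw [Fin.prod_univ_two fun b => (X - C ((starRingEnd ℂ) (A1 n 1 1) * A1 n b b))]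
  have h00 : A1 n 0 0 = 1 := rfl
  have h11 : A1 n 1 1 = ω n := rfl
  rw [h00, h11]
  simp only [map_one, one_mul, mul_one, conj_ω_mul]
  rw [← pow_mul,
    show (X - 1 : Polynomial ℂ) * (X - C (ω n)) * ((X - C ((starRingEnd ℂ) (ω n))) * (X - 1))
      = (X - 1)^2 * (X - C (ω n)) * (X - C ((starRingEnd ℂ) (ω n))) from by ring,
    mul_pow, mul_pow, ← pow_mul, ← Nat.mul_assoc]
end

section
/- With the notation of the magnon transfer operator: let D = diag(1,ω,ω̄,1)⊗I⊗I on C^2⊗C^2⊗C^{r+1}⊗C^{s+1} and let X = E_{r,s} − D. Then (E_{r,s} − I)^{m}(E_{r,s} − ωI)^{m}(E_{r,s} − ω̄I)^{m} = 0 for m = min(r,s)+2. In particular every Jordan block of E_{r,s} has size at most min(r,s)+2. -/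
open Kronecker Polynomial

namespace ErsAux

lemma conj_ω_mul (n : ℕ) : starRingEnd ℂ (ω n) * ω n = 1 := by
  have : starRingEnd ℂ (ω n) = Complex.exp (-(2 * Real.pi * Complex.I / n)) := by
    rw [ω, ← Complex.exp_conj]
    congr 1
    simp only [map_div₀, map_mul, Complex.conj_I, Complex.conj_ofNat, Complex.conj_ofReal,
      Complex.conj_natCast]
    ring
  rw [this, ω, ← Complex.exp_add, neg_add_cancel, Complex.exp_zero]

lemma mconj_A1 (n : ℕ) : mconj (A1 n) = !![1, 0; 0, starRingEnd ℂ (ω n)] := by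
  ext i j
  fin_cases i <;> fin_cases j <;> simp [mconj, A1]

lemma A0_mul_A0 : A0 * A0 = 0 := by
  ext i j
  fin_cases i <;> fin_cases j <;> simp [A0, Matrix.mul_apply, Fin.sum_univ_two]

lemma A0_mul_DL (n : ℕ) : A0 * mconj (A1 n) = A0 := by
  rw [mconj_A1]
  ext i j
  fin_cases i <;> fin_cases j <;> simp [A0, Matrix.mul_apply, Fin.sum_univ_two]

lemma DL_mul_A0 (n : ℕ) : mconj (A1 n) * A0 = starRingEnd ℂ (ω n) • A0 := by
  rw [mconj_A1]
  ext i j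
  fin_cases i <;> fin_cases j <;> simp [A0, Matrix.mul_apply, Fin.sum_univ_two]

lemma A0_mul_DR (n : ℕ) : A0 * A1 n = A0 := by
  ext i j
  fin_cases i <;> fin_cases j <;> simp [A0, A1, Matrix.mul_apply, Fin.sum_univ_two]

lemma DR_mul_A0 (n : ℕ) : A1 n * A0 = ω n • A0 := by
  ext i j
  fin_cases i <;> fin_cases j <;> simp [A0, A1, Matrix.mul_apply, Fin.sum_univ_two]

lemma Jplus_pow_apply (r : ℕ) : ∀ (k : ℕ) (i j : Fin (r+1)),
    (Jplus r ^ k) i j ≠ 0 → (i : ℕ) = (j : ℕ) + k := by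
  intro k
  induction k with
  | zero => intro i j h; simp [Matrix.one_apply] at h; simp [h]
  | succ k ih =>
    intro i j h
    rw [pow_succ, Matrix.mul_apply] at h
    obtain ⟨c, hc⟩ := Finset.exists_ne_zero_of_sum_ne_zero h
    have h1 : (Jplus r ^ k) i c ≠ 0 := fun h0 => hc.2 (by rw [h0, zero_mul])
    have h2 : Jplus r c j ≠ 0 := fun h0 => hc.2 (by rw [h0, mul_zero])
    have e1 := ih i c h1
    have e2 : (c : ℕ) = (j : ℕ) + 1 := by
      by_contra hne
      exact h2 (by simp [Jplus, hne])
    omega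

lemma Jplus_pow_eq_zero (r : ℕ) {k : ℕ} (hk : r + 1 ≤ k) : (Jplus r) ^ k = 0 := by
  ext i j
  by_contra h
  have := Jplus_pow_apply r k i j h
  omega

end ErsAux

namespace ErsAux

variable (n r s : ℕ)

abbrev Mat (r s : ℕ) :=
  Matrix (((Fin 2 × Fin 2) × Fin (r + 1)) × Fin (s + 1))
    (((Fin 2 × Fin 2) × Fin (r + 1)) × Fin (s + 1)) ℂ

/-- exponents of `Jplus r` in each of the four `X`-terms -/
def ea : Fin 4 → ℕ := ![0, 0, 1, 1]
/-- exponents of `Jplus s` -/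
def eb : Fin 4 → ℕ := ![0, 1, 0, 1]

noncomputable def BB (n : ℕ) (i : Fin 4) : Matrix (Fin 2) (Fin 2) ℂ :=
  if ea i = 0 then A0 else mconj (A1 n)

noncomputable def CC (n : ℕ) (i : Fin 4) : Matrix (Fin 2) (Fin 2) ℂ :=
  if eb i = 0 then A0 else A1 n

noncomputable def DD : Mat r s := (mconj (A1 n) ⊗ₖ A1 n) ⊗ₖ (1 : Matrix (Fin (r+1)) (Fin (r+1)) ℂ)
    ⊗ₖ (1 : Matrix (Fin (s+1)) (Fin (s+1)) ℂ)

noncomputable def XX (i : Fin 4) : Mat r s :=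
  (BB n i ⊗ₖ CC n i) ⊗ₖ (Jplus r ^ ea i) ⊗ₖ (Jplus s ^ eb i)

lemma Ers_eq : Ers n r s = DD n r s + (XX n r s 0 + XX n r s 1 + XX n r s 2 + XX n r s 3) := by
  have h0 : mconj A0 = A0 := by
    ext i j; fin_cases i <;> fin_cases j <;> simp [mconj, A0]
  have ea0 : ea 0 = 0 := rfl
  have ea1 : ea 1 = 0 := rfl
  have ea2 : ea 2 = 1 := rfl
  have ea3 : ea 3 = 1 := rfl
  have eb0 : eb 0 = 0 := rfl
  have eb1 : eb 1 = 1 := rfl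
  have eb2 : eb 2 = 0 := rfl
  have eb3 : eb 3 = 1 := rfl
  simp only [Ers, DD, XX, BB, CC, ea0, ea1, ea2, ea3, eb0, eb1, eb2, eb3, h0]
  norm_num
  abel

/- products of words of letters {A0, M} with at least two A0's vanish -/
section TwoLetter

variable (f : Fin 4 → ℕ) (M : Matrix (Fin 2) (Fin 2) ℂ) (c c' : ℂ)
  (hAM : A0 * M = c • A0) (hMA : M * A0 = c' • A0)

noncomputable def FF (i : Fin 4) : Matrix (Fin 2) (Fin 2) ℂ := if f i = 0 then A0 else M

def pz : Fin 4 → Bool := fun i => f i == 0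

include hAM in
lemma A0_mul_Mpow : ∀ e : ℕ, A0 * M ^ e = c ^ e • A0 := by
  intro e
  induction e with
  | zero => simp
  | succ e ih =>
    rw [pow_succ, ← mul_assoc, ih, smul_mul_assoc, hAM, smul_smul, pow_succ]

lemma prod_no_A0 : ∀ l : List (Fin 4), l.countP (pz f) = 0 →
    (l.map (FF f M)).prod = M ^ l.length := by
  intro l
  induction l with
  | nil => simp
  | cons x xs ih =>
    intro h
    rw [List.countP_cons] at h
    have hx : ¬ (f x = 0) := by
      intro h0
      simp [pz, h0] at h
    have hxs : xs.countP (pz f) = 0 := by omega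
    simp only [List.map_cons, List.prod_cons, ih hxs, FF, if_neg hx, List.length_cons, pow_succ']

include hAM hMA in
lemma prod_one_A0 : ∀ l : List (Fin 4), 1 ≤ l.countP (pz f) →
    ∃ e : ℂ, (l.map (FF f M)).prod = e • A0 := by
  intro l
  induction l with
  | nil => simp
  | cons x xs ih =>
    intro h
    rw [List.countP_cons] at h
    by_cases hx : f x = 0
    · by_cases hxs : 1 ≤ xs.countP (pz f)
      · obtain ⟨e, he⟩ := ih hxs
        refine ⟨0, ?_⟩
        simp only [List.map_cons, List.prod_cons, he, FF, if_pos hx, Matrix.mul_smul,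
          A0_mul_A0, smul_zero, zero_smul]
      · have hxs0 : xs.countP (pz f) = 0 := by omega
        refine ⟨c ^ xs.length, ?_⟩
        simp only [List.map_cons, List.prod_cons, prod_no_A0 f M xs hxs0, FF, if_pos hx]
        exact A0_mul_Mpow M c hAM xs.length
    · have hxs : 1 ≤ xs.countP (pz f) := by
        simp [pz, hx] at h ⊢; try assumption
      obtain ⟨e, he⟩ := ih hxs
      refine ⟨e * c', ?_⟩
      simp only [List.map_cons, List.prod_cons, he, FF, if_neg hx, Matrix.mul_smul, hMA,
        smul_smul]

include hAM hMA in
lemma prod_two_A0 : ∀ l : List (Fin 4), 2 ≤ l.countP (pz f) →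
    (l.map (FF f M)).prod = 0 := by
  intro l
  induction l with
  | nil => simp
  | cons x xs ih =>
    intro h
    rw [List.countP_cons] at h
    by_cases hx : f x = 0
    · have hxs : 1 ≤ xs.countP (pz f) := by
        simp [pz, hx] at h ⊢; try assumption
      obtain ⟨e, he⟩ := prod_one_A0 f M c c' hAM hMA xs hxs
      simp only [List.map_cons, List.prod_cons, he, FF, if_pos hx, Matrix.mul_smul,
        A0_mul_A0, smul_zero]
    · have hxs : 2 ≤ xs.countP (pz f) := by
        simp [pz, hx] at h ⊢; try assumption
      simp only [List.map_cons, List.prod_cons, ih hxs, mul_zero]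

end TwoLetter

/-- counting: each letter contributes to the `f`-sum or to the zero-count -/
lemma length_le_sum_add_count (f : Fin 4 → ℕ) : ∀ l : List (Fin 4),
    l.length ≤ (l.map f).sum + l.countP (pz f) := by
  intro l
  induction l with
  | nil => simp
  | cons x xs ih =>
    rw [List.countP_cons, List.map_cons, List.sum_cons, List.length_cons]
    by_cases hx : f x = 0
    · simp only [pz, hx]
      simp
      omega
    · have : 1 ≤ f x := by omega
      omega

end ErsAux

namespace ErsAux

variable (n r s : ℕ)

/-- decomposition of a word in the `X`'s into Kronecker slots -/
lemma word_decomp : ∀ l : List (Fin 4),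
    (l.map (XX n r s)).prod =
      ((l.map (BB n)).prod ⊗ₖ (l.map (CC n)).prod) ⊗ₖ (Jplus r ^ (l.map ea).sum)
        ⊗ₖ (Jplus s ^ (l.map eb).sum) := by
  intro l
  induction l with
  | nil => simp [Matrix.one_kronecker_one]
  | cons x xs ih =>
    simp only [List.map_cons, List.prod_cons, List.sum_cons, ih, XX]
    rw [← Matrix.mul_kronecker_mul, ← Matrix.mul_kronecker_mul, ← Matrix.mul_kronecker_mul,
      ← pow_add, ← pow_add]

lemma word_vanish (l : List (Fin 4)) (h : min r s + 2 ≤ l.length) :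
    (l.map (XX n r s)).prod = 0 := by
  rw [word_decomp]
  by_cases hB : 2 ≤ l.countP (pz ea)
  · have : (l.map (BB n)).prod = 0 := by
      have := prod_two_A0 ea (mconj (A1 n)) 1 (starRingEnd ℂ (ω n))
        (by rw [A0_mul_DL, one_smul]) (DL_mul_A0 n) l hB
      exact this
    rw [this, Matrix.zero_kronecker, Matrix.zero_kronecker, Matrix.zero_kronecker]
  · by_cases hC : 2 ≤ l.countP (pz eb)
    · have : (l.map (CC n)).prod = 0 := by
        have := prod_two_A0 eb (A1 n) 1 (ω n)
          (by rw [A0_mul_DR, one_smul]) (DR_mul_A0 n) l hC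
        exact this
      rw [this, Matrix.kronecker_zero, Matrix.zero_kronecker, Matrix.zero_kronecker]
    · have ha := length_le_sum_add_count ea l
      have hb := length_le_sum_add_count eb l
      rcases le_total r s with hrs | hrs
      · have : Jplus r ^ (l.map ea).sum = 0 := by
          apply Jplus_pow_eq_zero
          have := min_eq_left hrs
          omega
        rw [this, Matrix.kronecker_zero, Matrix.zero_kronecker]
      · have : Jplus s ^ (l.map eb).sum = 0 := by
          apply Jplus_pow_eq_zero
          have := min_eq_right hrs
          omega
        rw [this, Matrix.kronecker_zero]

end ErsAux

namespace ErsAux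

variable (n r s : ℕ)

noncomputable def μ (i : Fin 4) : ℂ :=
  (if ea i = 0 then starRingEnd ℂ (ω n) else 1) * (if eb i = 0 then ω n else 1)

lemma DL_mul_BB (i : Fin 4) : mconj (A1 n) * BB n i =
    (if ea i = 0 then starRingEnd ℂ (ω n) else 1) • (BB n i * mconj (A1 n)) := by
  by_cases h : ea i = 0 <;> simp only [BB, if_pos, if_neg, h, if_true, if_false]
  · rw [DL_mul_A0, A0_mul_DL]
  · rw [one_smul]

lemma DR_mul_CC (i : Fin 4) : A1 n * CC n i =
    (if eb i = 0 then ω n else 1) • (CC n i * A1 n) := by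
  by_cases h : eb i = 0 <;> simp only [CC, if_pos, if_neg, h, if_true, if_false]
  · rw [DR_mul_A0, A0_mul_DR]
  · rw [one_smul]

lemma DD_mul_XX (i : Fin 4) :
    DD n r s * XX n r s i = μ n i • (XX n r s i * DD n r s) := by
  simp only [DD, XX, μ]
  simp only [← Matrix.mul_kronecker_mul]
  rw [DL_mul_BB, DR_mul_CC]
  simp only [Matrix.smul_kronecker, Matrix.kronecker_smul, one_mul, mul_one, smul_smul]
  congr 1
  ring

lemma DDpow_mul_XX (t : ℕ) (i : Fin 4) :
    DD n r s ^ t * XX n r s i = μ n i ^ t • (XX n r s i * DD n r s ^ t) := by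
  induction t with
  | zero => simp
  | succ t ih =>
    rw [pow_succ, mul_assoc, DD_mul_XX, Matrix.mul_smul, ← mul_assoc, ih, pow_succ]
    rw [smul_mul_assoc, smul_smul, mul_comm (μ n i), mul_assoc]

lemma DDpow_mul_word (t : ℕ) : ∀ l : List (Fin 4),
    DD n r s ^ t * (l.map (XX n r s)).prod =
      ((l.map (μ n)).prod ^ t) • ((l.map (XX n r s)).prod * DD n r s ^ t) := by
  intro l
  induction l with
  | nil => simp
  | cons x xs ih =>
    simp only [List.map_cons, List.prod_cons]
    rw [← mul_assoc, DDpow_mul_XX, smul_mul_assoc, mul_assoc, ih, Matrix.mul_smul,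
      smul_smul, ← mul_pow, mul_assoc]

noncomputable def dg (p : ((Fin 2 × Fin 2) × Fin (r + 1)) × Fin (s + 1)) : ℂ :=
  (if p.1.1.1 = 0 then 1 else starRingEnd ℂ (ω n)) * (if p.1.1.2 = 0 then 1 else ω n)

lemma DD_diag : DD n r s = Matrix.diagonal (dg n r s) := by
  ext ⟨⟨⟨a, b⟩, c⟩, d⟩ ⟨⟨⟨a', b'⟩, c'⟩, d'⟩
  simp only [DD, Matrix.kroneckerMap_apply, Matrix.diagonal_apply, Matrix.one_apply, dg,
    Prod.mk.injEq]
  fin_cases a <;> fin_cases a' <;> fin_cases b <;> fin_cases b' <;>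
    by_cases h3 : c = c' <;> by_cases h4 : d = d' <;>
      simp [h3, h4, mconj, A1, Matrix.map_apply] <;> ring

lemma DD_poly :
    (DD n r s - 1) * (DD n r s - ω n • 1) * (DD n r s - starRingEnd ℂ (ω n) • 1) = 0 := by
  have hsub : ∀ lam : ℂ, DD n r s - lam • 1 =
      Matrix.diagonal (fun p => dg n r s p - lam) := by
    intro lam
    rw [DD_diag, ← Matrix.diagonal_one, ← Matrix.diagonal_smul, Matrix.diagonal_sub]
    congr 1
    funext p
    simp
  have h1 : DD n r s - 1 = Matrix.diagonal (fun p => dg n r s p - 1) := by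
    have := hsub 1; rwa [one_smul] at this
  have hω := conj_ω_mul n
  have hz : ∀ p, (dg n r s p - 1) * (dg n r s p - ω n) * (dg n r s p - starRingEnd ℂ (ω n)) = 0 := by
    rintro ⟨⟨⟨a, b⟩, c⟩, d⟩
    fin_cases a <;> fin_cases b <;> simp [dg, hω]
  rw [h1, hsub, hsub, Matrix.diagonal_mul_diagonal, Matrix.diagonal_mul_diagonal]
  ext p q
  rcases eq_or_ne p q with h | h
  · subst h
    simpa [Matrix.diagonal_apply_eq] using hz p
  · simp [Matrix.diagonal_apply_ne _ h]

end ErsAux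


namespace ErsAux

variable (n r s : ℕ)

noncomputable def Pge (k : ℕ) : Submodule ℂ (Mat r s) :=
  Submodule.span ℂ {M | ∃ (l : List (Fin 4)) (t : ℕ),
    k ≤ l.length ∧ M = (l.map (XX n r s)).prod * DD n r s ^ t}

lemma Pge_antitone {k k' : ℕ} (h : k ≤ k') : Pge n r s k' ≤ Pge n r s k := by
  apply Submodule.span_mono
  rintro M ⟨l, t, hl, hM⟩
  exact ⟨l, t, le_trans h hl, hM⟩

lemma Pge_mul {k k' : ℕ} {x y : Mat r s} (hx : x ∈ Pge n r s k) (hy : y ∈ Pge n r s k') :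
    x * y ∈ Pge n r s (k + k') := by
  have hmem : x * y ∈ Pge n r s k * Pge n r s k' := Submodule.mul_mem_mul hx hy
  rw [Pge, Pge, Submodule.span_mul_span] at hmem
  refine Submodule.span_le.mpr ?_ hmem
  rintro z ⟨u, ⟨l, t, hl, rfl⟩, v, ⟨l', t', hl', rfl⟩, rfl⟩
  have key : ((l.map (XX n r s)).prod * DD n r s ^ t) *
      ((l'.map (XX n r s)).prod * DD n r s ^ t') =
      ((l'.map (μ n)).prod ^ t) •
        (((l ++ l').map (XX n r s)).prod * DD n r s ^ (t + t')) := by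
    rw [List.map_append, List.prod_append, mul_assoc, ← mul_assoc (DD n r s ^ t),
      DDpow_mul_word, smul_mul_assoc, Matrix.mul_smul, mul_assoc, mul_assoc, ← pow_add]
  dsimp only
  rw [key]
  exact Submodule.smul_mem _ _ (Submodule.subset_span
    ⟨l ++ l', t + t', by rw [List.length_append]; omega, rfl⟩)

lemma Pge_zero {x : Mat r s} (hx : x ∈ Pge n r s (min r s + 2)) : x = 0 := by
  have : Pge n r s (min r s + 2) ≤ ⊥ := by
    apply Submodule.span_le.mpr
    rintro M ⟨l, t, hl, rfl⟩
    simp only [SetLike.mem_coe, Submodule.mem_bot]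
    rw [word_vanish n r s l hl, zero_mul]
  simpa using this hx

lemma XX_mem (i : Fin 4) : XX n r s i ∈ Pge n r s 1 :=
  Submodule.subset_span ⟨[i], 0, by simp, by simp⟩

lemma DD_sub_mem (lam : ℂ) : DD n r s - lam • 1 ∈ Pge n r s 0 := by
  refine sub_mem ?_ (Submodule.smul_mem _ _ ?_)
  · exact Submodule.subset_span ⟨[], 1, by simp, by simp⟩
  · exact Submodule.subset_span ⟨[], 0, by simp, by simp⟩

set_option maxHeartbeats 1000000 in
lemma pE_mem :
    (Ers n r s - 1) * (Ers n r s - ω n • 1) * (Ers n r s - starRingEnd ℂ (ω n) • 1) ∈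
      Pge n r s 1 := by
  set S : Mat r s := XX n r s 0 + XX n r s 1 + XX n r s 2 + XX n r s 3 with hS
  have hSmem : S ∈ Pge n r s 1 :=
    add_mem (add_mem (add_mem (XX_mem n r s 0) (XX_mem n r s 1)) (XX_mem n r s 2))
      (XX_mem n r s 3)
  have hE : ∀ lam : ℂ, Ers n r s - lam • 1 = (DD n r s - lam • 1) + S := by
    intro lam
    rw [Ers_eq, hS]
    abel
  have hE1 : Ers n r s - 1 = (DD n r s - 1) + S := by
    have := hE 1
    rwa [one_smul] at this
  set u1 := DD n r s - 1 with hu1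
  set u2 := DD n r s - ω n • 1 with hu2
  set u3 := DD n r s - starRingEnd ℂ (ω n) • 1 with hu3
  have hu1m : u1 ∈ Pge n r s 0 := by
    have := DD_sub_mem n r s 1
    rwa [one_smul] at this
  have hu2m : u2 ∈ Pge n r s 0 := DD_sub_mem n r s _
  have hu3m : u3 ∈ Pge n r s 0 := DD_sub_mem n r s _
  rw [hE1, hE, hE, ← hu2, ← hu3]
  have expand : (u1 + S) * (u2 + S) * (u3 + S) =
      u1 * u2 * u3 + (u1 * u2 * S + (u1 * S) * (u3 + S) + (S * (u2 + S)) * (u3 + S)) := by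
    noncomm_ring
  rw [expand, hu1, hu2, hu3, DD_poly, zero_add, ← hu1, ← hu2, ← hu3]
  have h23 : u2 + S ∈ Pge n r s 0 := add_mem hu2m (Pge_antitone n r s (by omega) hSmem)
  have h33 : u3 + S ∈ Pge n r s 0 := add_mem hu3m (Pge_antitone n r s (by omega) hSmem)
  refine add_mem (add_mem ?_ ?_) ?_
  · exact Pge_antitone n r s (by norm_num) (Pge_mul n r s (Pge_mul n r s hu1m hu2m) hSmem)
  · exact Pge_antitone n r s (by norm_num) (Pge_mul n r s (Pge_mul n r s hu1m hSmem) h33)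
  · exact Pge_antitone n r s (by norm_num) (Pge_mul n r s (Pge_mul n r s hSmem h23) h33)

end ErsAux


/-- Annihilating polynomial for `E_{r,s}`: with `m = min(r,s) + 2`,
`(E_{r,s} − I)^m (E_{r,s} − ωI)^m (E_{r,s} − ω̄I)^m = 0`; in particular every Jordan
block of `E_{r,s}` has size at most `min(r,s) + 2`. -/
theorem Ers_annihilating (n r s : ℕ) (hn : 0 < n) (hr : r ≤ n) (hs : s ≤ n) :
    (Ers n r s - 1) ^ (min r s + 2) *
      (Ers n r s - ω n • 1) ^ (min r s + 2) *
      (Ers n r s - starRingEnd ℂ (ω n) • 1) ^ (min r s + 2) = 0 := by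
  set m := min r s + 2 with hm
  set E := Ers n r s with hEdef
  have hc : ∀ α β : ℂ, Commute (E - α • 1) (E - β • 1) := by
    intro α β
    have hE1 : Commute E ((β : ℂ) • (1 : ErsAux.Mat r s)) := (Commute.one_right E).smul_right β
    have hE2 : Commute ((α : ℂ) • (1 : ErsAux.Mat r s)) E := (Commute.one_left E).smul_left α
    have h11 : Commute ((α : ℂ) • (1 : ErsAux.Mat r s)) ((β : ℂ) • (1 : ErsAux.Mat r s)) :=
      ((Commute.refl (1 : ErsAux.Mat r s)).smul_right β).smul_left α
    exact ((Commute.refl E).sub_right hE1).sub_left (hE2.sub_right h11)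
  have hone : E - 1 = E - (1 : ℂ) • 1 := by rw [one_smul]
  have c12 : Commute (E - 1) (E - ω n • 1) := by rw [hone]; exact hc 1 (ω n)
  have c13 : Commute (E - 1) (E - starRingEnd ℂ (ω n) • 1) := by
    rw [hone]; exact hc 1 _
  have c23 : Commute (E - ω n • 1) (E - starRingEnd ℂ (ω n) • 1) := hc _ _
  set P := (E - 1) * (E - ω n • 1) * (E - starRingEnd ℂ (ω n) • 1) with hP
  have hpow : ∀ j : ℕ, P ^ j ∈ ErsAux.Pge n r s j := by
    intro j
    induction j with
    | zero =>
      exact pow_zero P ▸ Submodule.subset_span ⟨[], 0, by simp, by simp⟩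
    | succ j ih =>
      rw [pow_succ]
      exact ErsAux.Pge_mul n r s ih (ErsAux.pE_mem n r s)
  have hprod : P ^ m = 0 := ErsAux.Pge_zero n r s (hpow m)
  calc (E - 1) ^ m * (E - ω n • 1) ^ m * (E - starRingEnd ℂ (ω n) • 1) ^ m
      = ((E - 1) * (E - ω n • 1)) ^ m * (E - starRingEnd ℂ (ω n) • 1) ^ m := by
        rw [c12.mul_pow]
    _ = (((E - 1) * (E - ω n • 1)) * (E - starRingEnd ℂ (ω n) • 1)) ^ m := by
        rw [(c13.mul_left c23).mul_pow]
    _ = 0 := hprod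
end

section
/- Let ℋ = (C^p)^{⊗n}, let 𝒞 ⊆ ℋ be a subspace of dimension K with orthonormal basis ψ_1,...,ψ_K, and let 𝒩(ρ) = Σ_j R_j ρ R_j† be a CPTP map (Σ_j R_j†R_j = I). Define ε_approx = max_{α,β} Σ_j |⟨ψ_α|R_j|ψ_β⟩ − δ_{αβ}⟨ψ_1|R_j|ψ_1⟩|². Then for any unit vector Ψ ∈ 𝒞 and any orthonormal basis (φ_α) of 𝒞 with φ_1 = Ψ, and any α ≠ β: ⟨φ_α|𝒩(|φ_β⟩⟨φ_β|)|φ_α⟩ ≤ K⁴ ε_approx. -/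
/-- Approximate Knill–Laflamme estimate: if `ψ` is an orthonormal basis of the code
space `𝒞`, `𝒩(ρ) = Σ_j R_j ρ R_j†` is a CPTP map, and
`ε = max_{α,β} Σ_j |⟨ψ_α|R_j|ψ_β⟩ − δ_{αβ}⟨ψ_1|R_j|ψ_1⟩|²`, then for any unit vector
`Ψ ∈ 𝒞`, any orthonormal basis `φ` of `𝒞` with `φ_1 = Ψ`, and any `α ≠ β`:
`⟨φ_α|𝒩(|φ_β⟩⟨φ_β|)|φ_α⟩ = Σ_j |⟨φ_α|R_j|φ_β⟩|² ≤ K⁴ ε`. -/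
theorem approx_KL_offdiagonal (Nd J K : ℕ) (hK : 0 < K)
    (ψ : Fin K → EuclideanSpace ℂ (Fin Nd)) (hψ : Orthonormal ℂ ψ)
    (R : Fin J → (EuclideanSpace ℂ (Fin Nd) →L[ℂ] EuclideanSpace ℂ (Fin Nd)))
    (htp : ∑ j, (ContinuousLinearMap.adjoint (R j)).comp (R j) =
      ContinuousLinearMap.id ℂ (EuclideanSpace ℂ (Fin Nd)))
    (ε : ℝ)
    (hε : ε = ⨆ α : Fin K, ⨆ β : Fin K, ∑ j,
      ‖(inner ℂ (ψ α) (R j (ψ β)) : ℂ) -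
        (if α = β then (inner ℂ (ψ ⟨0, hK⟩) (R j (ψ ⟨0, hK⟩)) : ℂ) else 0)‖ ^ 2)
    (Ψ : EuclideanSpace ℂ (Fin Nd)) (hΨ : ‖Ψ‖ = 1)
    (hΨmem : Ψ ∈ Submodule.span ℂ (Set.range ψ))
    (φ : Fin K → EuclideanSpace ℂ (Fin Nd)) (hφ : Orthonormal ℂ φ)
    (hφspan : Submodule.span ℂ (Set.range φ) = Submodule.span ℂ (Set.range ψ))
    (hφ1 : φ ⟨0, hK⟩ = Ψ)
    (α β : Fin K) (hαβ : α ≠ β) :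
    ∑ j, ‖(inner ℂ (φ α) (R j (φ β)) : ℂ)‖ ^ 2 ≤ (K : ℝ) ^ 4 * ε := by
  haveI : Nonempty (Fin K) := ⟨⟨0, hK⟩⟩
  -- coefficients
  set c : Fin K → Fin K → ℂ := fun a γ => (inner ℂ (ψ γ) (φ a) : ℂ) with hc
  have hrep : ∀ a, φ a = ∑ γ, c a γ • ψ γ := by
    intro a
    have hmem : φ a ∈ Submodule.span ℂ (Set.range ψ) := by
      rw [← hφspan]; exact Submodule.subset_span ⟨a, rfl⟩
    rw [Submodule.mem_span_range_iff_exists_fun] at hmem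
    obtain ⟨l, hl⟩ := hmem
    have hcl : ∀ γ, c a γ = l γ := by
      intro γ
      simp only [hc]
      rw [← hl, hψ.inner_right_fintype]
    rw [← hl]
    exact Finset.sum_congr rfl fun γ _ => by rw [hcl γ]
  have hcbound : ∀ a γ, ‖c a γ‖ ≤ 1 := by
    intro a γ
    calc ‖c a γ‖ ≤ ‖ψ γ‖ * ‖φ a‖ := norm_inner_le_norm _ _
      _ = 1 := by rw [hψ.1 γ, hφ.1 a, one_mul]
  -- orthogonality relation
  have horth : ∑ γ, (starRingEnd ℂ) (c α γ) * c β γ = 0 := by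
    have h0 : (inner ℂ (φ α) (φ β) : ℂ) = 0 := hφ.2 hαβ
    rw [hrep α, hrep β] at h0
    rw [← h0, sum_inner]
    refine Finset.sum_congr rfl fun γ _ => ?_
    rw [inner_smul_left, inner_sum]
    congr 1
    rw [Finset.sum_eq_single γ]
    · rw [inner_smul_right, show (inner ℂ (ψ γ) (ψ γ) : ℂ) = 1 by
        rw [@inner_self_eq_norm_sq_to_K ℂ, hψ.1 γ]; norm_num, mul_one]
    · intro δ _ hδγ
      rw [inner_smul_right, hψ.2 hδγ.symm, mul_zero]
    · intro h; exact absurd (Finset.mem_univ γ) h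
  -- errors
  set m : Fin J → ℂ := fun j => (inner ℂ (ψ ⟨0, hK⟩) (R j (ψ ⟨0, hK⟩)) : ℂ) with hm
  set E : Fin J → Fin K → Fin K → ℂ :=
    fun j γ δ => (inner ℂ (ψ γ) (R j (ψ δ)) : ℂ) - (if γ = δ then m j else 0) with hE
  have key : ∀ j, (inner ℂ (φ α) (R j (φ β)) : ℂ)
      = ∑ γ, ∑ δ, (starRingEnd ℂ) (c α γ) * c β δ * E j γ δ := by
    intro j
    have expand : (inner ℂ (φ α) (R j (φ β)) : ℂ)
        = ∑ γ, ∑ δ, (starRingEnd ℂ) (c α γ) * c β δ * (inner ℂ (ψ γ) (R j (ψ δ)) : ℂ) := by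
      rw [hrep α, hrep β, map_sum, sum_inner]
      refine Finset.sum_congr rfl fun γ _ => ?_
      rw [inner_smul_left, inner_sum, Finset.mul_sum]
      refine Finset.sum_congr rfl fun δ _ => ?_
      rw [map_smul, inner_smul_right]; ring
    have hzero : ∑ γ, ∑ δ, (starRingEnd ℂ) (c α γ) * c β δ * (if γ = δ then m j else 0) = 0 := by
      have : ∀ γ, ∑ δ, (starRingEnd ℂ) (c α γ) * c β δ * (if γ = δ then m j else 0)
          = (starRingEnd ℂ) (c α γ) * c β γ * m j := by
        intro γ
        rw [Finset.sum_eq_single γ]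
        · simp
        · intro δ _ hδγ; simp [Ne.symm hδγ]
        · intro h; exact absurd (Finset.mem_univ γ) h
      simp only [this]
      rw [← Finset.sum_mul, horth, zero_mul]
    simp only [hE, mul_sub]
    rw [Finset.sum_congr rfl fun γ _ => Finset.sum_sub_distrib _ _, Finset.sum_sub_distrib,
      hzero, sub_zero, expand]
  -- pointwise bound on the inner product
  have hnorm : ∀ j, ‖(inner ℂ (φ α) (R j (φ β)) : ℂ)‖ ≤ ∑ γ, ∑ δ, ‖E j γ δ‖ := by
    intro j
    rw [key j]
    refine (norm_sum_le _ _).trans (Finset.sum_le_sum fun γ _ => ?_)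
    refine (norm_sum_le _ _).trans (Finset.sum_le_sum fun δ _ => ?_)
    rw [norm_mul, norm_mul, RCLike.norm_conj]
    calc ‖c α γ‖ * ‖c β δ‖ * ‖E j γ δ‖ ≤ 1 * 1 * ‖E j γ δ‖ := by
          gcongr <;> [exact hcbound α γ; exact hcbound β δ]
      _ = ‖E j γ δ‖ := by ring
  -- Cauchy–Schwarz on the K² terms
  have hsq : ∀ j, ‖(inner ℂ (φ α) (R j (φ β)) : ℂ)‖ ^ 2
      ≤ (K : ℝ) ^ 2 * ∑ γ, ∑ δ, ‖E j γ δ‖ ^ 2 := by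
    intro j
    have h1 : ‖(inner ℂ (φ α) (R j (φ β)) : ℂ)‖ ^ 2 ≤ (∑ γ, ∑ δ, ‖E j γ δ‖) ^ 2 := by
      have := hnorm j
      have h0 : (0:ℝ) ≤ ‖(inner ℂ (φ α) (R j (φ β)) : ℂ)‖ := norm_nonneg _
      nlinarith
    refine h1.trans ?_
    calc (∑ γ, ∑ δ, ‖E j γ δ‖) ^ 2
        ≤ (Finset.univ.card : ℝ) * ∑ γ, (∑ δ, ‖E j γ δ‖) ^ 2 :=
          sq_sum_le_card_mul_sum_sq
      _ ≤ (K : ℝ) * ∑ γ, ((K : ℝ) * ∑ δ, ‖E j γ δ‖ ^ 2) := by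
          rw [Finset.card_univ, Fintype.card_fin]
          refine mul_le_mul_of_nonneg_left (Finset.sum_le_sum fun γ _ => ?_)
            (Nat.cast_nonneg K)
          calc (∑ δ, ‖E j γ δ‖) ^ 2
              ≤ (Finset.univ.card : ℝ) * ∑ δ, ‖E j γ δ‖ ^ 2 :=
                sq_sum_le_card_mul_sum_sq
            _ = (K : ℝ) * ∑ δ, ‖E j γ δ‖ ^ 2 := by
                rw [Finset.card_univ, Fintype.card_fin]
      _ = (K : ℝ) ^ 2 * ∑ γ, ∑ δ, ‖E j γ δ‖ ^ 2 := by
          rw [← Finset.mul_sum]; ring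
  -- each column error sum is ≤ ε
  have hεb : ∀ γ δ, ∑ j, ‖E j γ δ‖ ^ 2 ≤ ε := by
    intro γ δ
    rw [hε]
    simp only [hE]
    have h1 : ∑ j, ‖(inner ℂ (ψ γ) (R j (ψ δ)) : ℂ) - (if γ = δ then m j else 0)‖ ^ 2
        ≤ ⨆ b : Fin K, ∑ j, ‖(inner ℂ (ψ γ) (R j (ψ b)) : ℂ) -
            (if γ = b then m j else 0)‖ ^ 2 :=
      le_ciSup (f := fun b : Fin K => ∑ j, ‖(inner ℂ (ψ γ) (R j (ψ b)) : ℂ) -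
            (if γ = b then m j else 0)‖ ^ 2)
        (Set.Finite.bddAbove (Set.finite_range _)) δ
    refine h1.trans ?_
    exact le_ciSup (f := fun a : Fin K => ⨆ b : Fin K, ∑ j,
        ‖(inner ℂ (ψ a) (R j (ψ b)) : ℂ) - (if a = b then m j else 0)‖ ^ 2)
      (Set.Finite.bddAbove (Set.finite_range _)) γ
  -- assemble
  calc ∑ j, ‖(inner ℂ (φ α) (R j (φ β)) : ℂ)‖ ^ 2
      ≤ ∑ j, (K : ℝ) ^ 2 * ∑ γ, ∑ δ, ‖E j γ δ‖ ^ 2 :=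
        Finset.sum_le_sum fun j _ => hsq j
    _ = (K : ℝ) ^ 2 * ∑ γ, ∑ δ, ∑ j, ‖E j γ δ‖ ^ 2 := by
        rw [← Finset.mul_sum]
        congr 1
        rw [Finset.sum_comm]
        exact Finset.sum_congr rfl fun γ _ => Finset.sum_comm
    _ ≤ (K : ℝ) ^ 2 * ∑ γ : Fin K, ∑ δ : Fin K, ε := by
        refine mul_le_mul_of_nonneg_left ?_ (by positivity)
        exact Finset.sum_le_sum fun γ _ => Finset.sum_le_sum fun δ _ => hεb γ δ
    _ = (K : ℝ) ^ 4 * ε := by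
        simp [Finset.sum_const, Finset.card_univ]
        ring
end
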